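/- arXiv:2203.09323 — 2 statements merged into one kernel-verified Lean document; each statement's English description precedes it below -/
import Mathlib

section
/- For all natural numbers e, i, d with e ≥ 1, the lattice rectangle R_{M×n} with width M = i + d + ⌊id/e⌋ and height n = e + i + d admits an (i,d)-covering. (Equivalently, m(e+i+d, i, d) ≥ i + d + ⌊id/e⌋.) -/
/-- A monotonous polyomino in the lattice rectangle `R_{m×n}`, spanning columns
`r` to `s` (with `1 ≤ r ≤ s ≤ m`), encoded by a monotone function `P` taking
values in `{1,…,n}` on `{r-1,…,s}`. -/
structure MonoPoly (m n : ℕ) where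
  r : ℕ
  s : ℕ
  P : ℕ → ℕ
  one_le_r : 1 ≤ r
  r_le_s : r ≤ s
  s_le_m : s ≤ m
  val_mem : ∀ t, r - 1 ≤ t → t ≤ s → 1 ≤ P t ∧ P t ≤ n
  mono : (∀ t u, r - 1 ≤ t → t ≤ u → u ≤ s → P t ≤ P u) ∨
         (∀ t u, r - 1 ≤ t → t ≤ u → u ≤ s → P u ≤ P t)

/-- The cell set of a monotonous polyomino:
`{(t,j) : r ≤ t ≤ s, min(P(t-1),P(t)) ≤ j ≤ max(P(t-1),P(t))}`. -/
def MonoPoly.cells {m n : ℕ} (Q : MonoPoly m n) : Set (ℕ × ℕ) :=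
  {c | Q.r ≤ c.1 ∧ c.1 ≤ Q.s ∧
       min (Q.P (c.1 - 1)) (Q.P c.1) ≤ c.2 ∧
       c.2 ≤ max (Q.P (c.1 - 1)) (Q.P c.1)}

/-- A monotonous polyomino is increasing if its encoding function is
nondecreasing on `{r-1,…,s}`. -/
def MonoPoly.Increasing {m n : ℕ} (Q : MonoPoly m n) : Prop :=
  ∀ t u, Q.r - 1 ≤ t → t ≤ u → u ≤ Q.s → Q.P t ≤ Q.P u

/-- A monotonous polyomino is decreasing if its encoding function is
nonincreasing on `{r-1,…,s}`. -/
def MonoPoly.Decreasing {m n : ℕ} (Q : MonoPoly m n) : Prop :=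
  ∀ t u, Q.r - 1 ≤ t → t ≤ u → u ≤ Q.s → Q.P u ≤ Q.P t

/-- A monotonous polyomino is fully defined on `{0,…,m}` if `r = 1` and `s = m`. -/
def MonoPoly.Full {m n : ℕ} (Q : MonoPoly m n) : Prop :=
  Q.r = 1 ∧ Q.s = m

/-- `F` is a covering of `R_{m×n}` by `p` monotonous polyominoes: every cell
`(k,l)` with `1 ≤ k ≤ m`, `1 ≤ l ≤ n` belongs to some member of the family. -/
def IsCovering (m n p : ℕ) (F : Fin p → MonoPoly m n) : Prop :=
  ∀ k l : ℕ, 1 ≤ k → k ≤ m → 1 ≤ l → l ≤ n → ∃ a, (k, l) ∈ (F a).cells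

/-- An `(i,d)`-covering of `R_{m×n}`: `i` increasing and `d` decreasing
monotonous polyominoes whose cell sets together cover `{1,…,m}×{1,…,n}`. -/
def IsIDCovering (m n i d : ℕ) (F : Fin i → MonoPoly m n)
    (G : Fin d → MonoPoly m n) : Prop :=
  (∀ a, (F a).Increasing) ∧ (∀ b, (G b).Decreasing) ∧
  ∀ k l : ℕ, 1 ≤ k → k ≤ m → 1 ≤ l → l ≤ n →
    (∃ a, (k, l) ∈ (F a).cells) ∨ (∃ b, (k, l) ∈ (G b).cells)

/-- The minimal number of monotonous polyominoes needed to cover `R_{m×n}`. -/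
noncomputable def minCover (m n : ℕ) : ℕ :=
  sInf {p : ℕ | ∃ F : Fin p → MonoPoly m n, IsCovering m n p F}

/-- `m(n,i,d) ∈ ℕ∞`: the supremum of all `m` such that `R_{m×n}` admits an
`(i,d)`-covering. -/
noncomputable def mSup (n i d : ℕ) : ℕ∞ :=
  ⨆ m ∈ {m : ℕ | ∃ (F : Fin i → MonoPoly m n) (G : Fin d → MonoPoly m n),
      IsIDCovering m n i d F G}, (m : ℕ∞)

/-- `f : ℕ → ℕ` encodes an increasing monotonous polyomino in `R_{m×n}` fully
defined on `{0,…,m}`: values in `{1,…,n}` and nondecreasing on `{0,…,m}`. -/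
def IncFull (m n : ℕ) (f : ℕ → ℕ) : Prop :=
  (∀ t, t ≤ m → 1 ≤ f t ∧ f t ≤ n) ∧ (∀ t u, t ≤ u → u ≤ m → f t ≤ f u)

/-- The cell set of an increasing polyomino fully defined on `{0,…,m}`,
encoded by the nondecreasing function `f`. -/
def cellsFull (m : ℕ) (f : ℕ → ℕ) : Set (ℕ × ℕ) :=
  {c | 1 ≤ c.1 ∧ c.1 ≤ m ∧ f (c.1 - 1) ≤ c.2 ∧ c.2 ≤ f c.1}


namespace Stmt14

def nn (e i d : ℕ) : ℕ := e + i + d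
def mm (e i d : ℕ) : ℕ := i + d + i * d / e

structure GSched (e i d : ℕ) where
  U : ℕ → ℕ → ℕ
  D : ℕ → ℕ → ℕ
  hUlb : ∀ a t, 1 ≤ a → a ≤ i → t ≤ mm e i d → 1 ≤ U a t
  hUub : ∀ a t, 1 ≤ a → a ≤ i → t ≤ mm e i d → U a t ≤ nn e i d
  hU0 : ∀ a, 1 ≤ a → a ≤ i → U a 0 = a
  hUM : ∀ a, 1 ≤ a → a ≤ i → U a (mm e i d) = nn e i d - i + a
  hUmono : ∀ a t u, 1 ≤ a → a ≤ i → t ≤ u → u ≤ mm e i d → U a t ≤ U a u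
  hUsort : ∀ a t, 1 ≤ a → a + 1 ≤ i → t ≤ mm e i d → U a t ≤ U (a+1) t
  hDlb : ∀ b t, 1 ≤ b → b ≤ d → t ≤ mm e i d → 1 ≤ D b t
  hDub : ∀ b t, 1 ≤ b → b ≤ d → t ≤ mm e i d → D b t ≤ nn e i d
  hD0 : ∀ b, 1 ≤ b → b ≤ d → D b 0 = nn e i d - d + b
  hDM : ∀ b, 1 ≤ b → b ≤ d → D b (mm e i d) = b
  hDmono : ∀ b t u, 1 ≤ b → b ≤ d → t ≤ u → u ≤ mm e i d → D b u ≤ D b t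
  hDsort : ∀ b t, 1 ≤ b → b + 1 ≤ d → t ≤ mm e i d → D b t ≤ D (b+1) t
  cover : ∀ t l, 1 ≤ t → t ≤ mm e i d → 1 ≤ l → l ≤ nn e i d →
    (∃ a, 1 ≤ a ∧ a ≤ i ∧ U a (t-1) ≤ l ∧ l ≤ U a t) ∨
    (∃ b, 1 ≤ b ∧ b ≤ d ∧ D b t ≤ l ∧ l ≤ D b (t-1))

/-- The trivial scheme: valid when `⌊id/e⌋ = 0`. -/
def trivialSched (e i d : ℕ) (hQ : i * d / e = 0) : GSched e i d := by
  have hm : mm e i d = i + d := by simp [mm, hQ]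
  have hn : nn e i d = e + i + d := rfl
  refine
  { U := fun a t => if t ≤ i - a then a else a + e + d
    D := fun b t => if t ≤ i + b - 1 then e + i + b else b
    hUlb := ?_, hUub := ?_, hU0 := ?_, hUM := ?_, hUmono := ?_, hUsort := ?_
    hDlb := ?_, hDub := ?_, hD0 := ?_, hDM := ?_, hDmono := ?_, hDsort := ?_
    cover := ?_ }
  · intro a t ha1 ha2 ht; split <;> omega
  · intro a t ha1 ha2 ht; simp only [nn]; split <;> omega
  · intro a ha1 ha2; simp
  · intro a ha1 ha2; simp only [mm, nn, hQ]; rw [if_neg (by omega)]; omega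
  · intro a t u ha1 ha2 htu hu; split <;> split <;> omega
  · intro a t ha1 ha2 ht; split <;> split <;> omega
  · intro b t hb1 hb2 ht; split <;> omega
  · intro b t hb1 hb2 ht; simp only [nn]; split <;> omega
  · intro b hb1 hb2; simp only [nn]; rw [if_pos (by omega)]; omega
  · intro b hb1 hb2; simp only [mm, nn, hQ]; rw [if_neg (by omega)]
  · intro b t u hb1 hb2 htu hu; split <;> split <;> omega
  · intro b t hb1 hb2 ht; split <;> split <;> omega
  · intro t l ht1 ht2 hl1 hl2
    rw [hm] at ht2; rw [hn] at hl2
    by_cases ht : t ≤ i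
    · -- cascade column; mover is U_{i+1-t}
      left
      by_cases hc1 : l ≤ i - t
      · exact ⟨l, by omega, by omega, by rw [if_pos (by omega)], by rw [if_pos (by omega)]⟩
      by_cases hc2 : l ≤ i + 1 - t + e + d
      · refine ⟨i + 1 - t, by omega, by omega, ?_, ?_⟩
        · rw [if_pos (by omega)]; omega
        · rw [if_neg (by omega)]; omega
      · refine ⟨l - e - d, by omega, by omega, ?_, ?_⟩
        · rw [if_neg (by omega)]; omega
        · rw [if_neg (by omega)]; omega
    · -- dive column; diver is D_{t-i}
      right
      by_cases hc1 : l < t - i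
      · exact ⟨l, by omega, by omega, by rw [if_neg (by omega)], by rw [if_neg (by omega)]⟩
      by_cases hc2 : l ≤ e + i + (t - i)
      · refine ⟨t - i, by omega, by omega, ?_, ?_⟩
        · rw [if_neg (by omega)]; omega
        · rw [if_pos (by omega)]; omega
      · refine ⟨l - e - i, by omega, by omega, ?_, ?_⟩
        · rw [if_pos (by omega)]; omega
        · rw [if_pos (by omega)]; omega

end Stmt14

namespace Stmt14

/-- Vertical flip: swaps increasing and decreasing tokens. -/
def flip {e i d : ℕ} (S : GSched e i d) : GSched e d i := by
  have hn : nn e d i = nn e i d := by simp [nn]; omega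
  have hm : mm e d i = mm e i d := by
    simp only [mm]; rw [Nat.mul_comm]; omega
  have hnv : nn e i d = e + i + d := rfl
  refine
  { U := fun a t => nn e i d + 1 - S.D (d + 1 - a) t
    D := fun b t => nn e i d + 1 - S.U (i + 1 - b) t
    hUlb := ?_, hUub := ?_, hU0 := ?_, hUM := ?_, hUmono := ?_, hUsort := ?_
    hDlb := ?_, hDub := ?_, hD0 := ?_, hDM := ?_, hDmono := ?_, hDsort := ?_
    cover := ?_ }
  · intro a t ha1 ha2 ht; rw [hm] at ht
    have := S.hDub (d+1-a) t (by omega) (by omega) ht; omega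
  · intro a t ha1 ha2 ht; rw [hm] at ht; rw [hn]
    have := S.hDlb (d+1-a) t (by omega) (by omega) ht; omega
  · intro a ha1 ha2
    rw [S.hD0 (d+1-a) (by omega) (by omega)]; omega
  · intro a ha1 ha2; rw [hm, hn]
    rw [S.hDM (d+1-a) (by omega) (by omega)]; omega
  · intro a t u ha1 ha2 htu hu; rw [hm] at hu
    have h1 := S.hDmono (d+1-a) t u (by omega) (by omega) htu hu
    have h2 := S.hDub (d+1-a) t (by omega) (by omega) (by omega); omega
  · intro a t ha1 ha2 ht; rw [hm] at ht
    have e1 : d + 1 - a = (d - a) + 1 := by omega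
    have e2 : d + 1 - (a + 1) = d - a := by omega
    rw [e1, e2]
    have := S.hDsort (d - a) t (by omega) (by omega) ht; omega
  · intro b t hb1 hb2 ht; rw [hm] at ht
    have := S.hUub (i+1-b) t (by omega) (by omega) ht; omega
  · intro b t hb1 hb2 ht; rw [hm] at ht; rw [hn]
    have := S.hUlb (i+1-b) t (by omega) (by omega) ht; omega
  · intro b hb1 hb2; rw [hn]
    rw [S.hU0 (i+1-b) (by omega) (by omega)]; omega
  · intro b hb1 hb2; rw [hm]
    rw [S.hUM (i+1-b) (by omega) (by omega)]; omega
  · intro b t u hb1 hb2 htu hu; rw [hm] at hu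
    have h1 := S.hUmono (i+1-b) t u (by omega) (by omega) htu hu
    have h2 := S.hUub (i+1-b) u (by omega) (by omega) hu; omega
  · intro b t hb1 hb2 ht; rw [hm] at ht
    have e1 : i + 1 - b = (i - b) + 1 := by omega
    have e2 : i + 1 - (b + 1) = i - b := by omega
    rw [e1, e2]
    have h1 := S.hUsort (i - b) t (by omega) (by omega) ht
    have h2 := S.hUub ((i-b)+1) t (by omega) (by omega) ht; omega
  · intro t l ht1 ht2 hl1 hl2
    rw [hm] at ht2; rw [hn] at hl2
    rcases S.cover t (nn e i d + 1 - l) ht1 ht2 (by omega) (by omega) with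
      ⟨a, ha1, ha2, hal, har⟩ | ⟨b, hb1, hb2, hbl, hbr⟩
    · right
      refine ⟨i + 1 - a, by omega, by omega, ?_, ?_⟩
      · have e1 : i + 1 - (i + 1 - a) = a := by omega
        rw [e1]
        have h2 := S.hUub a t (by omega) (by omega) ht2; omega
      · have e1 : i + 1 - (i + 1 - a) = a := by omega
        rw [e1]
        have h2 := S.hUub a (t-1) (by omega) (by omega) (by omega); omega
    · left
      refine ⟨d + 1 - b, by omega, by omega, ?_, ?_⟩
      · have e1 : d + 1 - (d + 1 - b) = b := by omega
        rw [e1]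
        have h2 := S.hDub b (t-1) (by omega) (by omega) (by omega); omega
      · have e1 : d + 1 - (d + 1 - b) = b := by omega
        rw [e1]
        have h2 := S.hDub b t (by omega) (by omega) ht2; omega

end Stmt14

namespace Stmt14

/-- The recurrence step `d → d + e`: prepend `e + i` columns and `e` new
decreasing tokens below a shifted copy of the old schedule. -/
def stepA {e i d : ℕ} (he : 1 ≤ e) (S : GSched e i d) : GSched e i (d + e) := by
  have hMM : mm e i (d + e) = mm e i d + e + i := by
    simp only [mm]
    have h1 : i * (d + e) = i * d + i * e := by ring
    rw [h1, Nat.add_mul_div_right _ _ he]; omega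
  have hNN : nn e i (d + e) = nn e i d + e := by simp only [nn]; omega
  have hnv : nn e i d = e + i + d := rfl
  have hmv : i ≤ mm e i d := by simp only [mm]; generalize i * d / e = q; omega
  refine
  { U := fun a t => if t ≤ i + e then (if t ≤ i - a then a else a + e)
           else S.U a (t - (i+e)) + e
    D := fun b t => if b ≤ e then (if t ≤ i + b - 1 then i + e + b else b)
           else S.D (b - e) (t - (i+e)) + e
    hUlb := ?_, hUub := ?_, hU0 := ?_, hUM := ?_, hUmono := ?_, hUsort := ?_
    hDlb := ?_, hDub := ?_, hD0 := ?_, hDM := ?_, hDmono := ?_, hDsort := ?_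
    cover := ?_ }
  · intro a t ha1 ha2 ht; rw [hMM] at ht
    split
    · split <;> omega
    · have := S.hUlb a (t - (i+e)) ha1 ha2 (by omega); omega
  · intro a t ha1 ha2 ht; rw [hMM] at ht; rw [hNN]
    split
    · split <;> omega
    · have := S.hUub a (t - (i+e)) ha1 ha2 (by omega); omega
  · intro a ha1 ha2
    rw [if_pos (by omega), if_pos (by omega)]
  · intro a ha1 ha2; rw [hMM, hNN]
    rw [if_neg (by omega)]
    have h1 : mm e i d + e + i - (i + e) = mm e i d := by omega
    rw [h1, S.hUM a ha1 ha2]; omega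
  · intro a t u ha1 ha2 htu hu; rw [hMM] at hu
    by_cases hti : t ≤ i + e <;> by_cases hui : u ≤ i + e
    · rw [if_pos hti, if_pos hui]; split <;> split <;> omega
    · rw [if_pos hti, if_neg hui]
      have h1 := S.hUmono a 0 (u - (i+e)) ha1 ha2 (by omega) (by omega)
      rw [S.hU0 a ha1 ha2] at h1
      split <;> omega
    · exfalso; omega
    · rw [if_neg hti, if_neg hui]
      have := S.hUmono a (t - (i+e)) (u - (i+e)) ha1 ha2 (by omega) (by omega); omega
  · intro a t ha1 ha2 ht; rw [hMM] at ht
    split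
    · split <;> split <;> omega
    · have := S.hUsort a (t - (i+e)) ha1 ha2 (by omega); omega
  · intro b t hb1 hb2 ht; rw [hMM] at ht
    split
    · split <;> omega
    · have := S.hDlb (b - e) (t - (i+e)) (by omega) (by omega) (by omega); omega
  · intro b t hb1 hb2 ht; rw [hMM] at ht; rw [hNN]
    split
    · split <;> omega
    · have := S.hDub (b - e) (t - (i+e)) (by omega) (by omega) (by omega); omega
  · intro b hb1 hb2; rw [hNN]
    by_cases hbe : b ≤ e
    · rw [if_pos hbe, if_pos (by omega)]; omega
    · rw [if_neg hbe]
      have h0 : (0:ℕ) - (i+e) = 0 := by omega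
      rw [h0, S.hD0 (b - e) (by omega) (by omega)]; omega
  · intro b hb1 hb2; rw [hMM]
    by_cases hbe : b ≤ e
    · rw [if_pos hbe, if_neg (by omega)]
    · rw [if_neg hbe]
      have h1 : mm e i d + e + i - (i + e) = mm e i d := by omega
      rw [h1, S.hDM (b - e) (by omega) (by omega)]; omega
  · intro b t u hb1 hb2 htu hu; rw [hMM] at hu
    by_cases hbe : b ≤ e
    · rw [if_pos hbe, if_pos hbe]; split <;> split <;> omega
    · rw [if_neg hbe, if_neg hbe]
      have := S.hDmono (b - e) (t - (i+e)) (u - (i+e)) (by omega) (by omega)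
        (by omega) (by omega); omega
  · intro b t hb1 hb2 ht; rw [hMM] at ht
    by_cases hb2e : b + 1 ≤ e
    · rw [if_pos (by omega), if_pos hb2e]; split <;> split <;> omega
    by_cases hbe : b ≤ e
    · -- b = e : diver vs first old token
      rw [if_pos hbe, if_neg hb2e]
      have hb1e : b + 1 - e = 1 := by omega
      rw [hb1e]
      by_cases hti : t ≤ i + e
      · have h0 : t - (i+e) = 0 := by omega
        rw [h0, S.hD0 1 (by omega) (by omega)]
        split <;> omega
      · have := S.hDlb 1 (t - (i+e)) (by omega) (by omega) (by omega)
        rw [if_neg (by omega)]; omega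
    · rw [if_neg hbe, if_neg (by omega)]
      have e1 : b + 1 - e = (b - e) + 1 := by omega
      rw [e1]
      have := S.hDsort (b - e) (t - (i+e)) (by omega) (by omega) (by omega); omega
  · intro t l ht1 ht2 hl1 hl2
    rw [hMM] at ht2; rw [hNN] at hl2
    by_cases hcasc : t ≤ i
    · by_cases h1 : l ≤ i - t
      · left
        exact ⟨l, by omega, by omega,
          by rw [if_pos (by omega), if_pos (by omega)],
          by rw [if_pos (by omega), if_pos (by omega)]⟩
      by_cases h2 : l ≤ i + 1 - t + e
      · left
        refine ⟨i + 1 - t, by omega, by omega, ?_, ?_⟩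
        · rw [if_pos (by omega), if_pos (by omega)]; omega
        · rw [if_pos (by omega), if_neg (by omega)]; omega
      by_cases h3 : l ≤ i + e
      · left
        refine ⟨l - e, by omega, by omega, ?_, ?_⟩
        · rw [if_pos (by omega), if_neg (by omega)]; omega
        · rw [if_pos (by omega), if_neg (by omega)]; omega
      by_cases h4 : l ≤ i + 2*e
      · right
        refine ⟨l - i - e, by omega, by omega, ?_, ?_⟩
        · rw [if_pos (by omega), if_pos (by omega)]; omega
        · rw [if_pos (by omega), if_pos (by omega)]; omega
      · right
        refine ⟨l - e - i, by omega, by omega, ?_, ?_⟩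
        · rw [if_neg (by omega)]
          have h0 : t - (i+e) = 0 := by omega
          rw [h0, S.hD0 (l - e - i - e) (by omega) (by omega)]; omega
        · rw [if_neg (by omega)]
          have h0 : t - 1 - (i+e) = 0 := by omega
          rw [h0, S.hD0 (l - e - i - e) (by omega) (by omega)]; omega
    by_cases hdive : t ≤ i + e
    · by_cases h1 : l < t - i
      · right
        refine ⟨l, by omega, by omega, ?_, ?_⟩
        · rw [if_pos (by omega), if_neg (by omega)]
        · rw [if_pos (by omega), if_neg (by omega)]
      by_cases h2 : l ≤ i + e + (t - i)
      · right
        refine ⟨t - i, by omega, by omega, ?_, ?_⟩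
        · rw [if_pos (by omega), if_neg (by omega)]; omega
        · rw [if_pos (by omega), if_pos (by omega)]; omega
      by_cases h3 : l ≤ i + 2*e
      · right
        refine ⟨l - i - e, by omega, by omega, ?_, ?_⟩
        · rw [if_pos (by omega), if_pos (by omega)]; omega
        · rw [if_pos (by omega), if_pos (by omega)]; omega
      · right
        refine ⟨l - e - i, by omega, by omega, ?_, ?_⟩
        · rw [if_neg (by omega)]
          have h0 : t - (i+e) = 0 := by omega
          rw [h0, S.hD0 (l - e - i - e) (by omega) (by omega)]; omega
        · rw [if_neg (by omega)]
          have h0 : t - 1 - (i+e) = 0 := by omega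
          rw [h0, S.hD0 (l - e - i - e) (by omega) (by omega)]; omega
    · by_cases h1 : l ≤ e
      · right
        refine ⟨l, by omega, by omega, ?_, ?_⟩
        · rw [if_pos (by omega), if_neg (by omega)]
        · rw [if_pos (by omega), if_neg (by omega)]
      · rcases S.cover (t - (i+e)) (l - e) (by omega) (by omega) (by omega) (by omega)
          with ⟨a, ha1, ha2, hal, har⟩ | ⟨b, hb1, hb2, hbl, hbr⟩
        · left
          refine ⟨a, ha1, ha2, ?_, ?_⟩
          · by_cases hj : t - 1 ≤ i + e
            · rw [if_pos hj, if_neg (by omega)]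
              have h0 := S.hU0 a ha1 ha2
              have he1 : t - (i + e) - 1 = 0 := by omega
              rw [he1, h0] at hal; omega
            · rw [if_neg hj]
              have he1 : t - 1 - (i+e) = t - (i+e) - 1 := by omega
              rw [he1]; omega
          · rw [if_neg (by omega)]; omega
        · right
          refine ⟨e + b, by omega, by omega, ?_, ?_⟩
          · rw [if_neg (by omega)]
            have hbe : e + b - e = b := by omega
            rw [hbe]; omega
          · rw [if_neg (by omega)]
            have hbe : e + b - e = b := by omega
            have he1 : t - 1 - (i+e) = t - (i+e) - 1 := by omega
            rw [hbe, he1]; omega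

end Stmt14

namespace Stmt14

/-- Chained sortedness for U. -/
lemma GSched.sortU {e i d : ℕ} (S : GSched e i d) {a a' t : ℕ} (h1 : 1 ≤ a)
    (hab : a ≤ a') (ha' : a' ≤ i) (ht : t ≤ mm e i d) : S.U a t ≤ S.U a' t := by
  induction a', hab using Nat.le_induction with
  | base => exact le_rfl
  | succ k hk ih =>
    exact le_trans (ih (by omega)) (S.hUsort k t (by omega) (by omega) ht)

/-- Chained sortedness for D. -/
lemma GSched.sortD {e i d : ℕ} (S : GSched e i d) {b b' t : ℕ} (h1 : 1 ≤ b)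
    (hbb : b ≤ b') (hb' : b' ≤ d) (ht : t ≤ mm e i d) : S.D b t ≤ S.D b' t := by
  induction b', hbb using Nat.le_induction with
  | base => exact le_rfl
  | succ k hk ih =>
    exact le_trans (ih (by omega)) (S.hDsort k t (by omega) (by omega) ht)

section Transpose

variable {e i d : ℕ}

/-- Count function for the transposed increasing tokens. -/
def cntU (S : GSched (i*d/e) i d) (α v : ℕ) : ℕ :=
  ((Finset.Icc 1 (nn e i d)).filter (fun j => S.U (i+1-α) (j-1) ≤ v)).card

/-- Count function for the transposed decreasing tokens. -/
def cntD (S : GSched (i*d/e) i d) (b v : ℕ) : ℕ :=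
  ((Finset.Icc 1 (nn e i d)).filter (fun j => v < S.D b (j-1))).card

lemma hn_le_hM (he : 1 ≤ e) (hQ : 1 ≤ i * d / e) : nn e i d ≤ mm (i*d/e) i d := by
  have hQpos : 0 < i * d / e := hQ
  have h1 : (i*d/e) * e ≤ i*d := Nat.div_mul_le_self _ _
  have h2 : e ≤ i*d/(i*d/e) := (Nat.le_div_iff_mul_le hQpos).mpr
    (by rw [Nat.mul_comm]; exact h1)
  simp only [nn, mm]; omega

lemma hM_eq : mm e i d = nn (i*d/e) i d := by simp only [mm, nn]; omega

lemma cntU_le (S : GSched (i*d/e) i d) (α v : ℕ) : cntU S α v ≤ nn e i d := by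
  have h := Finset.card_le_card (Finset.filter_subset
    (fun j => S.U (i+1-α) (j-1) ≤ v) (Finset.Icc 1 (nn e i d)))
  rwa [Nat.card_Icc, Nat.add_sub_cancel] at h

lemma cntU_mono_v (S : GSched (i*d/e) i d) (α : ℕ) {v w : ℕ} (hvw : v ≤ w) :
    cntU S α v ≤ cntU S α w := by
  apply Finset.card_le_card
  intro j hj
  simp only [Finset.mem_filter] at hj ⊢
  exact ⟨hj.1, le_trans hj.2 hvw⟩

lemma cntD_le (S : GSched (i*d/e) i d) (b v : ℕ) : cntD S b v ≤ nn e i d := by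
  have h := Finset.card_le_card (Finset.filter_subset
    (fun j => v < S.D b (j-1)) (Finset.Icc 1 (nn e i d)))
  rwa [Nat.card_Icc, Nat.add_sub_cancel] at h

lemma cntD_anti_v (S : GSched (i*d/e) i d) (b : ℕ) {v w : ℕ} (hvw : v ≤ w) :
    cntD S b w ≤ cntD S b v := by
  apply Finset.card_le_card
  intro j hj
  simp only [Finset.mem_filter] at hj ⊢
  exact ⟨hj.1, lt_of_le_of_lt (by omega) hj.2⟩

lemma cntU_mono_idx (he : 1 ≤ e) (hQ : 1 ≤ i * d / e) (S : GSched (i*d/e) i d)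
    {β α : ℕ} (hβ : 1 ≤ β) (hβα : β ≤ α) (hα : α ≤ i) (v : ℕ) :
    cntU S β v ≤ cntU S α v := by
  apply Finset.card_le_card
  intro j hj
  simp only [Finset.mem_filter, Finset.mem_Icc] at hj ⊢
  refine ⟨hj.1, le_trans ?_ hj.2⟩
  exact S.sortU (by omega) (by omega) (by omega)
    (by have := hn_le_hM he hQ; omega)

lemma cntD_mono_idx (he : 1 ≤ e) (hQ : 1 ≤ i * d / e) (S : GSched (i*d/e) i d)
    {β b : ℕ} (hβ : 1 ≤ β) (hβb : β ≤ b) (hb : b ≤ d) (v : ℕ) :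
    cntD S β v ≤ cntD S b v := by
  apply Finset.card_le_card
  intro j hj
  simp only [Finset.mem_filter, Finset.mem_Icc] at hj ⊢
  refine ⟨hj.1, lt_of_lt_of_le hj.2 ?_⟩
  exact S.sortD (by omega) hβb hb (by have := hn_le_hM he hQ; omega)

/-- The transpose-and-clamp move: builds a schedule for `(e,i,d)` out of one
for `(⌊id/e⌋, i, d)`. -/
def transposeS (he : 1 ≤ e) (hQ : 1 ≤ i * d / e) (S : GSched (i*d/e) i d) :
    GSched e i d := by
  have hi : 1 ≤ i := by
    rcases Nat.eq_zero_or_pos i with h | h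
    · subst h; simp at hQ
    · exact h
  have hd : 1 ≤ d := by
    rcases Nat.eq_zero_or_pos d with h | h
    · subst h; simp at hQ
    · exact h
  have hnM := hn_le_hM (i := i) (d := d) he hQ
  have hME := hM_eq (e := e) (i := i) (d := d)
  have hnv : nn e i d = e + i + d := rfl
  have hin : i ≤ nn e i d := by simp only [nn]; omega
  have hdn : d ≤ nn e i d := by simp only [nn]; omega
  refine
  { U := fun α v => max α (min (cntU S α v) (nn e i d - i + α))
    D := fun b v => max b (min (cntD S b v) (nn e i d - d + b))
    hUlb := ?_, hUub := ?_, hU0 := ?_, hUM := ?_, hUmono := ?_, hUsort := ?_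
    hDlb := ?_, hDub := ?_, hD0 := ?_, hDM := ?_, hDmono := ?_, hDsort := ?_
    cover := ?_ }
  · intro α v h1 h2 hv; omega
  · intro α v h1 h2 hv
    have := cntU_le S α v
    have h3 : nn e i d - i + α ≤ nn e i d := by omega
    omega
  · intro α h1 h2
    have hz : cntU S α 0 = 0 := by
      apply Finset.card_eq_zero.mpr
      apply Finset.filter_eq_empty_iff.mpr
      intro j hj
      simp only [Finset.mem_Icc] at hj
      have := S.hUlb (i+1-α) (j-1) (by omega) (by omega) (by omega)
      omega
    rw [hz]; omega
  · intro α h1 h2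
    have hz : cntU S α (mm e i d) = nn e i d := by
      simp only [cntU]
      have hsub : Finset.Icc 1 (nn e i d) ⊆
          (Finset.Icc 1 (nn e i d)).filter (fun j => S.U (i+1-α) (j-1) ≤ mm e i d) := by
        intro j hj
        simp only [Finset.mem_filter, Finset.mem_Icc] at hj ⊢
        refine ⟨hj, ?_⟩
        have := S.hUub (i+1-α) (j-1) (by omega) (by omega) (by omega)
        omega
      have h4 := Finset.card_le_card hsub
      have h5 := Finset.card_le_card (Finset.filter_subset
        (fun j => S.U (i+1-α) (j-1) ≤ mm e i d) (Finset.Icc 1 (nn e i d)))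
      rw [Nat.card_Icc, Nat.add_sub_cancel] at h4 h5
      omega
    rw [hz]; omega
  · intro α v w h1 h2 hvw hw
    have := cntU_mono_v S α hvw; omega
  · intro α v h1 h2 hv
    have := cntU_mono_idx he hQ S (β := α) (α := α+1) (by omega) (by omega) (by omega) v
    omega
  · intro b v h1 h2 hv; omega
  · intro b v h1 h2 hv
    have := cntD_le S b v
    omega
  · intro b h1 h2
    have hz : cntD S b 0 = nn e i d := by
      simp only [cntD]
      have hsub : Finset.Icc 1 (nn e i d) ⊆
          (Finset.Icc 1 (nn e i d)).filter (fun j => 0 < S.D b (j-1)) := by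
        intro j hj
        simp only [Finset.mem_filter, Finset.mem_Icc] at hj ⊢
        refine ⟨hj, ?_⟩
        have := S.hDlb b (j-1) (by omega) (by omega) (by omega)
        omega
      have h4 := Finset.card_le_card hsub
      have h5 := Finset.card_le_card (Finset.filter_subset
        (fun j => 0 < S.D b (j-1)) (Finset.Icc 1 (nn e i d)))
      rw [Nat.card_Icc, Nat.add_sub_cancel] at h4 h5
      omega
    rw [hz]; omega
  · intro b h1 h2
    have hz : cntD S b (mm e i d) = 0 := by
      apply Finset.card_eq_zero.mpr
      apply Finset.filter_eq_empty_iff.mpr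
      intro j hj
      simp only [Finset.mem_Icc] at hj
      have := S.hDub b (j-1) (by omega) (by omega) (by omega)
      omega
    rw [hz]; omega
  · intro b v w h1 h2 hvw hw
    have := cntD_anti_v S b hvw; omega
  · intro b v h1 h2 hv
    have := cntD_mono_idx he hQ S (β := b) (b := b+1) (by omega) (by omega) (by omega) v
    omega
  · intro t l ht1 ht2 hl1 hl2
    rcases S.cover l t hl1 (by omega) ht1 (by omega) with
      ⟨a, ha1, ha2, hal, har⟩ | ⟨b, hb1, hb2, hbl, hbr⟩
    · -- increasing token; α := i + 1 - a
      have hia : i + 1 - (i + 1 - a) = a := by omega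
      have tr1 : l ≤ cntU S (i+1-a) t := by
        have hsub : Finset.Icc 1 l ⊆
            (Finset.Icc 1 (nn e i d)).filter (fun j => S.U (i+1-(i+1-a)) (j-1) ≤ t) := by
          intro j hj
          simp only [Finset.mem_filter, Finset.mem_Icc] at hj ⊢
          refine ⟨⟨hj.1, by omega⟩, ?_⟩
          rw [hia]
          exact le_trans (S.hUmono a (j-1) (l-1) ha1 ha2 (by omega) (by omega)) hal
        have h4 := Finset.card_le_card hsub
        rw [Nat.card_Icc, Nat.add_sub_cancel] at h4
        exact le_trans h4 (le_of_eq rfl)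
      have tr2 : cntU S (i+1-a) (t-1) ≤ l := by
        have hsub : (Finset.Icc 1 (nn e i d)).filter
            (fun j => S.U (i+1-(i+1-a)) (j-1) ≤ t - 1) ⊆ Finset.Icc 1 l := by
          intro j hj
          simp only [Finset.mem_filter, Finset.mem_Icc] at hj ⊢
          rw [hia] at hj
          refine ⟨hj.1.1, ?_⟩
          by_contra hcon
          have hjl : l ≤ j - 1 := by omega
          have := S.hUmono a l (j-1) ha1 ha2 hjl (by omega)
          omega
        have h4 := Finset.card_le_card hsub
        rw [Nat.card_Icc, Nat.add_sub_cancel] at h4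
        exact le_trans (le_of_eq rfl) h4
      left
      set α := i + 1 - a with hα
      by_cases hlo : l < α
      · refine ⟨l, by omega, by omega, ?_, ?_⟩
        · have hcc := cntU_mono_idx he hQ S (β := l) (α := α) (by omega) (by omega)
            (by omega) (t-1)
          have : cntU S l (t-1) ≤ l := le_trans hcc tr2
          omega
        · omega
      by_cases hhi : nn e i d - i + α < l
      · refine ⟨i + l - nn e i d, by omega, by omega, ?_, ?_⟩
        · have h5 : nn e i d - i + (i + l - nn e i d) = l := by omega
          rw [h5]; omega
        · have hcc := cntU_mono_idx he hQ S (β := α) (α := i + l - nn e i d)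
            (by omega) (by omega) (by omega) t
          have h6 : l ≤ cntU S (i + l - nn e i d) t := le_trans tr1 hcc
          have h5 : nn e i d - i + (i + l - nn e i d) = l := by omega
          rw [h5]; omega
      · refine ⟨α, by omega, by omega, ?_, ?_⟩
        · omega
        · omega
    · -- decreasing token
      have tr1 : cntD S b t ≤ l := by
        have hsub : (Finset.Icc 1 (nn e i d)).filter
            (fun j => t < S.D b (j-1)) ⊆ Finset.Icc 1 l := by
          intro j hj
          simp only [Finset.mem_filter, Finset.mem_Icc] at hj ⊢
          refine ⟨hj.1.1, ?_⟩
          by_contra hcon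
          have hjl : l ≤ j - 1 := by omega
          have := S.hDmono b l (j-1) hb1 hb2 hjl (by omega)
          omega
        have h4 := Finset.card_le_card hsub
        rw [Nat.card_Icc, Nat.add_sub_cancel] at h4
        exact h4
      have tr2 : l ≤ cntD S b (t-1) := by
        have hsub : Finset.Icc 1 l ⊆
            (Finset.Icc 1 (nn e i d)).filter (fun j => t - 1 < S.D b (j-1)) := by
          intro j hj
          simp only [Finset.mem_filter, Finset.mem_Icc] at hj ⊢
          refine ⟨⟨hj.1, by omega⟩, ?_⟩
          have := S.hDmono b (j-1) (l-1) hb1 hb2 (by omega) (by omega)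
          omega
        have h4 := Finset.card_le_card hsub
        rw [Nat.card_Icc, Nat.add_sub_cancel] at h4
        exact h4
      right
      by_cases hlo : l < b
      · refine ⟨l, by omega, by omega, ?_, ?_⟩
        · have hcc := cntD_mono_idx he hQ S (β := l) (b := b) (by omega) (by omega)
            (by omega) t
          have : cntD S l t ≤ l := le_trans hcc tr1
          omega
        · omega
      by_cases hhi : nn e i d - d + b < l
      · refine ⟨d + l - nn e i d, by omega, by omega, ?_, ?_⟩
        · have h5 : nn e i d - d + (d + l - nn e i d) = l := by omega
          rw [h5]; omega
        · have hcc := cntD_mono_idx he hQ S (β := b) (b := d + l - nn e i d)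
            (by omega) (by omega) (by omega) (t-1)
          have h6 : l ≤ cntD S (d + l - nn e i d) (t-1) := le_trans tr2 hcc
          have h5 : nn e i d - d + (d + l - nn e i d) = l := by omega
          rw [h5]; omega
      · exact ⟨b, by omega, by omega, by omega, by omega⟩

end Transpose

end Stmt14

namespace Stmt14

lemma gsched_exists : ∀ N e i d : ℕ, 1 ≤ e → e + i + d ≤ N → Nonempty (GSched e i d) := by
  intro N
  induction N with
  | zero => intro e i d he hN; omega
  | succ N ih =>
    intro e i d he hN
    by_cases hd : e ≤ d
    · obtain ⟨S⟩ := ih e i (d - e) he (by omega)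
      exact ⟨(show (d - e) + e = d by omega) ▸ stepA he S⟩
    by_cases hi : e ≤ i
    · obtain ⟨S⟩ := ih e (i - e) d he (by omega)
      have S2 := stepA he (flip S)
      exact ⟨flip ((show (i - e) + e = i by omega) ▸ S2)⟩
    by_cases hQ : i * d / e = 0
    · exact ⟨trivialSched e i d hQ⟩
    · have hQ1 : 1 ≤ i * d / e := Nat.one_le_iff_ne_zero.mpr hQ
      have hQlt : i * d / e < e := by
        have h1 : i * d < e * e := by
          calc i * d ≤ (e-1) * d := Nat.mul_le_mul_right _ (by omega)
            _ ≤ (e-1) * e := Nat.mul_le_mul_left _ (by omega)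
            _ < e * e := (Nat.mul_lt_mul_right (by omega)).mpr (by omega)
        exact (Nat.div_lt_iff_lt_mul (by omega)).mpr h1
      have hmeas : i * d / e + i + d ≤ N := by
        generalize hq : i * d / e = q at hQ1 hQlt
        omega
      obtain ⟨S⟩ := ih (i*d/e) i d hQ1 hmeas
      exact ⟨transposeS he hQ1 S⟩

end Stmt14

private theorem stmt14_aux (e i d : ℕ) (he : 1 ≤ e) :
    ∃ (F : Fin i → MonoPoly (i + d + i * d / e) (e + i + d))
      (G : Fin d → MonoPoly (i + d + i * d / e) (e + i + d)),
      IsIDCovering (i + d + i * d / e) (e + i + d) i d F G := by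
  obtain ⟨S⟩ := Stmt14.gsched_exists (e+i+d) e i d he le_rfl
  have hm1 : 0 < i → 1 ≤ i + d + i * d / e := by
    intro h; generalize i * d / e = q; omega
  have hm2 : 0 < d → 1 ≤ i + d + i * d / e := by
    intro h; generalize i * d / e = q; omega
  refine ⟨fun a =>
    { r := 1, s := i + d + i * d / e, P := S.U (a.1+1)
      one_le_r := le_rfl
      r_le_s := hm1 (by have := a.isLt; omega)
      s_le_m := le_rfl
      val_mem := fun t _ ht =>
        ⟨S.hUlb (a.1+1) t (by omega) (by have := a.isLt; omega) ht,
         S.hUub (a.1+1) t (by omega) (by have := a.isLt; omega) ht⟩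
      mono := Or.inl (fun t u _ htu hu =>
        S.hUmono (a.1+1) t u (by omega) (by have := a.isLt; omega) htu hu) },
    fun b =>
    { r := 1, s := i + d + i * d / e, P := S.D (b.1+1)
      one_le_r := le_rfl
      r_le_s := hm2 (by have := b.isLt; omega)
      s_le_m := le_rfl
      val_mem := fun t _ ht =>
        ⟨S.hDlb (b.1+1) t (by omega) (by have := b.isLt; omega) ht,
         S.hDub (b.1+1) t (by omega) (by have := b.isLt; omega) ht⟩
      mono := Or.inr (fun t u _ htu hu =>
        S.hDmono (b.1+1) t u (by omega) (by have := b.isLt; omega) htu hu) },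
    ?_, ?_, ?_⟩
  · intro a t u ht htu hu
    exact S.hUmono (a.1+1) t u (by omega) (by have := a.isLt; omega) htu hu
  · intro b t u ht htu hu
    exact S.hDmono (b.1+1) t u (by omega) (by have := b.isLt; omega) htu hu
  · intro k l hk1 hk2 hl1 hl2
    rcases S.cover k l hk1 hk2 hl1 hl2 with
      ⟨a, ha1, ha2, h1, h2⟩ | ⟨b, hb1, hb2, h1, h2⟩
    · left
      refine ⟨⟨a - 1, by omega⟩, ?_⟩
      simp only [MonoPoly.cells, Set.mem_setOf_eq]
      have hrw : a - 1 + 1 = a := by omega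
      rw [hrw]
      exact ⟨hk1, hk2, le_trans (min_le_left _ _) h1, le_trans h2 (le_max_right _ _)⟩
    · right
      refine ⟨⟨b - 1, by omega⟩, ?_⟩
      simp only [MonoPoly.cells, Set.mem_setOf_eq]
      have hrw : b - 1 + 1 = b := by omega
      rw [hrw]
      exact ⟨hk1, hk2, le_trans (min_le_right _ _) h1, le_trans h2 (le_max_left _ _)⟩


/-- For `e ≥ 1`, the rectangle of width `i + d + ⌊id/e⌋` and height `e + i + d`
admits an `(i,d)`-covering. -/
theorem stmt14 (e i d : ℕ) (he : 1 ≤ e) :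
    ∃ (F : Fin i → MonoPoly (i + d + i * d / e) (e + i + d))
      (G : Fin d → MonoPoly (i + d + i * d / e) (e + i + d)),
      IsIDCovering (i + d + i * d / e) (e + i + d) i d F G := by
  exact stmt14_aux e i d he
end

section
/- Let m, n, i be positive natural numbers and let I_1, …, I_i : {0,…,m} → {1,…,n} be nondecreasing functions encoding increasing monotonous polyominoes in R_{m×n} that are fully defined on {0,…,m} and whose cell sets are pairwise disjoint, with i ≤ n. Then the total number of cells covered by I_1, …, I_i is at most i·(m + n − i). -/
lemma sum_range_card_le' : ∀ (k : ℕ) (S : Finset ℕ), S.card = k →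
    ∑ j ∈ Finset.range k, j ≤ ∑ x ∈ S, x := by
  intro k
  induction k with
  | zero => intro S _; simp
  | succ k ih =>
    intro S hS
    have hne : S.Nonempty := Finset.card_pos.mp (by omega)
    have hMem : S.max' hne ∈ S := S.max'_mem hne
    have herase : (S.erase (S.max' hne)).card = k := by
      rw [Finset.card_erase_of_mem hMem, hS]
      omega
    have hsub : S ⊆ Finset.range (S.max' hne + 1) := fun x hx =>
      Finset.mem_range.mpr (Nat.lt_succ_of_le (S.le_max' x hx))
    have hcard : k + 1 ≤ S.max' hne + 1 := by
      have := (Finset.card_le_card hsub).trans_eq (Finset.card_range _)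
      omega
    calc ∑ j ∈ Finset.range (k+1), j = (∑ j ∈ Finset.range k, j) + k :=
          Finset.sum_range_succ _ _
      _ ≤ (∑ x ∈ S.erase (S.max' hne), x) + S.max' hne :=
          add_le_add (ih _ herase) (by omega)
      _ = ∑ x ∈ S, x := Finset.sum_erase_add S _ hMem

lemma sum_inj_lb {k : ℕ} (g : Fin k → ℕ) (hg : Function.Injective g) :
    ∑ j ∈ Finset.range k, j ≤ ∑ a, g a := by
  have h1 : ∑ x ∈ Finset.univ.image g, x = ∑ a, g a :=
    Finset.sum_image fun x _ y _ h => hg h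
  have h2 : (Finset.univ.image g).card = k := by
    rw [Finset.card_image_of_injective _ hg, Finset.card_univ, Fintype.card_fin]
  rw [← h1]
  exact sum_range_card_le' k _ h2

lemma tele (f : ℕ → ℕ) : ∀ m, (∀ t u, t ≤ u → u ≤ m → f t ≤ f u) →
    ∑ t ∈ Finset.Icc 1 m, (f t - f (t-1) + 1) = m + f m - f 0 := by
  intro m
  induction m with
  | zero => intro _; simp
  | succ m ih =>
    intro hf
    rw [Finset.sum_Icc_succ_top (by omega : 1 ≤ m+1),
      ih (fun t u h1 h2 => hf t u h1 (by omega))]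
    have h0 : f 0 ≤ f m := hf 0 m (by omega) (by omega)
    have h1 : f m ≤ f (m+1) := hf m (m+1) (by omega) (le_refl _)
    simp only [Nat.add_sub_cancel]
    omega

/-- If `I₁,…,I_i` are increasing polyominoes fully defined on `{0,…,m}` with
pairwise disjoint cell sets and `i ≤ n`, then the total number of covered
cells is at most `i(m + n - i)`. -/
theorem stmt16 (m n i : ℕ) (hm : 1 ≤ m) (hn : 1 ≤ n) (hi : 1 ≤ i) (hin : i ≤ n)
    (Q : Fin i → (ℕ → ℕ)) (hQ : ∀ a, IncFull m n (Q a))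
    (hdisj : ∀ a b, a ≠ b → Disjoint (cellsFull m (Q a)) (cellsFull m (Q b))) :
    (⋃ a, cellsFull m (Q a)).ncard ≤ i * (m + n - i) := by
  have hmono : ∀ a, ∀ t u, t ≤ u → u ≤ m → Q a t ≤ Q a u := fun a => (hQ a).2
  have hval : ∀ a, ∀ t, t ≤ m → 1 ≤ Q a t ∧ Q a t ≤ n := fun a => (hQ a).1
  set B : Fin i → Finset (ℕ × ℕ) := fun a =>
    (Finset.Icc 1 m).biUnion (fun t => {t} ×ˢ Finset.Icc (Q a (t-1)) (Q a t)) with hB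
  have hcells : ∀ a, cellsFull m (Q a) = ↑(B a) := by
    intro a; ext ⟨k,l⟩
    simp only [cellsFull, hB, Set.mem_setOf_eq, Finset.coe_biUnion, Set.mem_iUnion,
      Finset.mem_coe, Finset.mem_product, Finset.mem_Icc, Finset.mem_singleton]
    constructor
    · rintro ⟨h1,h2,h3,h4⟩; exact ⟨k, ⟨h1,h2⟩, rfl, h3, h4⟩
    · rintro ⟨t, ⟨ht1,ht2⟩, rfl, h3, h4⟩; exact ⟨ht1,ht2,h3,h4⟩
  have hU : (⋃ a, cellsFull m (Q a)) = ↑(Finset.univ.biUnion B) := by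
    rw [Finset.coe_biUnion]
    simp [hcells]
  rw [hU, Set.ncard_coe_finset]
  -- per-polyomino card bound
  have hcard : ∀ a, (B a).card ≤ m + Q a m - Q a 0 := by
    intro a
    have h1 : (B a).card ≤ ∑ t ∈ Finset.Icc 1 m, (Q a t - Q a (t-1) + 1) := by
      refine (Finset.card_biUnion_le).trans ?_
      apply Finset.sum_le_sum
      intro t ht
      rw [Finset.card_product, Finset.card_singleton, one_mul, Nat.card_Icc]
      have := hmono a (t-1) t (Nat.sub_le t 1) (Finset.mem_Icc.mp ht).2
      omega
    rw [tele (Q a) m (hmono a)] at h1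
    exact h1
  -- injectivity
  have injm : Function.Injective (fun a => Q a m) := by
    intro a b h
    simp only at h
    by_contra hne
    have hd := hdisj a b hne
    have hma : (m, Q a m) ∈ cellsFull m (Q a) :=
      ⟨hm, le_rfl, hmono a (m-1) m (Nat.sub_le m 1) le_rfl, le_rfl⟩
    have hmb : (m, Q a m) ∈ cellsFull m (Q b) :=
      ⟨hm, le_rfl, h ▸ hmono b (m-1) m (Nat.sub_le m 1) le_rfl, h.le⟩
    exact Set.disjoint_left.mp hd hma hmb
  have inj0 : Function.Injective (fun a => Q a 0) := by
    intro a b h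
    simp only at h
    by_contra hne
    have hd := hdisj a b hne
    have hma : (1, Q a 0) ∈ cellsFull m (Q a) :=
      ⟨le_rfl, hm, le_of_eq (by norm_num), hmono a 0 1 (Nat.zero_le _) hm⟩
    have hmb : (1, Q a 0) ∈ cellsFull m (Q b) :=
      ⟨le_rfl, hm, le_of_eq (by rw [h]; norm_num), h ▸ hmono b 0 1 (Nat.zero_le _) hm⟩
    exact Set.disjoint_left.mp hd hma hmb
  -- arithmetic setup
  have hle : ∀ a, Q a 0 ≤ Q a m := fun a => hmono a 0 m (Nat.zero_le _) le_rfl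
  have hbnd1 : ∀ a, 1 ≤ Q a 0 := fun a => (hval a 0 (Nat.zero_le _)).1
  have hbndn : ∀ a, Q a m ≤ n := fun a => (hval a m le_rfl).2
  set S1 := ∑ a, Q a m with hS1
  set S0 := ∑ a, Q a 0 with hS0d
  set D := ∑ a : Fin i, (Q a m - Q a 0) with hD
  set T := ∑ a : Fin i, (n - Q a m) with hTd
  set G := ∑ j ∈ Finset.range i, j with hGd
  have eD : D + S0 = S1 := by
    rw [hD, hS0d, hS1, ← Finset.sum_add_distrib]
    exact Finset.sum_congr rfl fun a _ => by have := hle a; omega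
  have eT : S1 + T = i * n := by
    rw [hS1, hTd, ← Finset.sum_add_distrib]
    have : ∀ a ∈ Finset.univ, Q a m + (n - Q a m) = n := fun a _ => by
      have := hbndn a; omega
    rw [Finset.sum_congr rfl this]
    simp [mul_comm]
  have hT : G ≤ T := by
    apply sum_inj_lb
    intro a b h
    simp only at h
    have ha := hbndn a; have hb := hbndn b
    exact injm (show Q a m = Q b m by omega)
  have hS0 : G + i ≤ S0 := by
    have h1 : G ≤ ∑ a : Fin i, (Q a 0 - 1) := by
      apply sum_inj_lb
      intro a b h
      simp only at h
      have ha := hbnd1 a; have hb := hbnd1 b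
      exact inj0 (show Q a 0 = Q b 0 by omega)
    have h2 : (∑ a : Fin i, (Q a 0 - 1)) + i = S0 := by
      rw [hS0d]
      have he : ∀ a ∈ Finset.univ, Q a 0 = (Q a 0 - 1) + 1 := fun a _ => by
        have := hbnd1 a; omega
      rw [Finset.sum_congr rfl he, Finset.sum_add_distrib]
      simp
    omega
  have hG2 : G * 2 = i * (i - 1) := Finset.sum_range_id_mul_two i
  have hii : i * i = G * 2 + i := by
    have h2 : i * (i - 1 + 1) = i * (i-1) + i * 1 := Nat.mul_add i (i-1) 1
    rw [Nat.sub_add_cancel hi, mul_one] at h2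
    rw [hG2]; exact h2
  have hA : i * n = i * i + i * (n - i) := by
    rw [← Nat.mul_add, Nat.add_sub_cancel' hin]
  have hgoal_eq : i * (m + n - i) = i * m + i * (n - i) := by
    rw [show m + n - i = m + (n-i) by omega, Nat.mul_add]
  rw [hgoal_eq]
  have hmain : (Finset.univ.biUnion B).card ≤ i * m + D := by
    calc (Finset.univ.biUnion B).card ≤ ∑ a, (B a).card := Finset.card_biUnion_le
      _ ≤ ∑ a, (m + Q a m - Q a 0) := Finset.sum_le_sum fun a _ => hcard a
      _ = ∑ a : Fin i, (m + (Q a m - Q a 0)) :=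
          Finset.sum_congr rfl fun a _ => by have := hle a; omega
      _ = i * m + D := by
          rw [Finset.sum_add_distrib, hD]
          simp [mul_comm]
  have hfin : D ≤ i * (n - i) := by linarith
  linarith
end
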